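/- Let U(x) = arcsin(a(x − 1/2)/(pKC + b_1)) for x ∈ [0,1], where a, p, K, C, b_1 > 0 satisfy a/2 ≤ pKC + b_1. Then ∫₀¹ sin(U(x)) dx = 0, and the function u(t,x) = U(x) + V_1·t + V_0 satisfies, for the frequency function ω(x) = a(x − 1/2) and b_0 = V_1, the continuum-limit equation ∂u/∂t = ω(x) + pK·∫₀¹ sin(u(t,y) − u(t,x)) dy + b_1·sin(V(t) − u(t,x)) + b_0, provided C = ∫₀¹ cos(U(y)) dy. -/

import Mathlib

open Real intervalIntegral

/-- The synchronized profile U(x) = arcsin(a(x−1/2)/(pKC+b₁)) satisfies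
∫₀¹ sin U = 0, and u(t,x) = U(x) + V(t) solves the continuum-limit equation
∂u/∂t = ω(x) + pK·∫₀¹ sin(u(t,y) − u(t,x)) dy + b₁ sin(V(t) − u(t,x)) + b₀
with ω(x) = a(x − 1/2) and b₀ = V₁, provided C = ∫₀¹ cos U. -/
theorem continuum_limit_synchronized_solution
    (a p K C b1 V1 V0 b0 : ℝ)
    (ha : 0 < a) (hp : 0 < p) (hK : 0 < K) (hC : 0 < C) (hb1 : 0 < b1)
    (hbound : a / 2 ≤ p * K * C + b1) (hb0 : b0 = V1)
    (V : ℝ → ℝ) (hV : ∀ t, V t = V1 * t + V0)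
    (ω : ℝ → ℝ) (hω : ∀ x, ω x = a * (x - 1 / 2))
    (U : ℝ → ℝ)
    (hU : ∀ x, U x = Real.arcsin (a * (x - 1 / 2) / (p * K * C + b1)))
    (u : ℝ → ℝ → ℝ) (hu : ∀ t x, u t x = U x + V t)
    (hCeq : C = ∫ y in (0 : ℝ)..1, Real.cos (U y)) :
    (∫ x in (0 : ℝ)..1, Real.sin (U x)) = 0 ∧
      ∀ t x, x ∈ Set.Icc (0 : ℝ) 1 →
        HasDerivAt (fun s => u s x)
          (ω x + p * K * (∫ y in (0 : ℝ)..1, Real.sin (u t y - u t x))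
            + b1 * Real.sin (V t - u t x) + b0) t := by
  set D := p * K * C + b1 with hD
  have hDpos : 0 < D := by positivity
  have hsin : ∀ x ∈ Set.Icc (0:ℝ) 1, Real.sin (U x) = a * (x - 1/2) / D := by
    intro x hx
    rw [hU]
    apply Real.sin_arcsin
    · rw [neg_le, ← neg_div, div_le_one hDpos]
      nlinarith [hx.1, hx.2]
    · rw [div_le_one hDpos]
      nlinarith [hx.1, hx.2]
  have hcongr : Set.EqOn (fun x => Real.sin (U x)) (fun x => a * (x - 1/2) / D)
      (Set.uIcc (0:ℝ) 1) := by
    intro x hx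
    exact hsin x (by rwa [Set.uIcc_of_le (by norm_num : (0:ℝ) ≤ 1)] at hx)
  have hint0 : (∫ x in (0:ℝ)..1, Real.sin (U x)) = 0 := by
    rw [intervalIntegral.integral_congr hcongr]
    have : (fun x : ℝ => a * (x - 1/2) / D) = fun x => (a/D) * x - a/(2*D) := by
      funext x; field_simp
    rw [this,
      intervalIntegral.integral_sub (intervalIntegral.intervalIntegrable_id.const_mul _)
        intervalIntegrable_const,
      intervalIntegral.integral_const_mul, integral_id, intervalIntegral.integral_const]
    norm_num
    field_simp
    ring
  refine ⟨hint0, ?_⟩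
  intro t x hx
  have hUcont : Continuous U := by
    have : U = fun x => Real.arcsin (a * (x - 1 / 2) / D) := funext hU
    rw [this]
    exact Real.continuous_arcsin.comp
      ((continuous_const.mul (continuous_id.sub continuous_const)).div_const D)
  have hintegral : (∫ y in (0:ℝ)..1, Real.sin (u t y - u t x)) = - (C * Real.sin (U x)) := by
    have heq : ∀ y, Real.sin (u t y - u t x)
        = Real.sin (U y) * Real.cos (U x) - Real.cos (U y) * Real.sin (U x) := by
      intro y
      rw [hu, hu]
      have : U y + V t - (U x + V t) = U y - U x := by ring
      rw [this, Real.sin_sub]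
    simp only [heq]
    have hc1 : Continuous (fun y => Real.sin (U y) * Real.cos (U x)) :=
      (Real.continuous_sin.comp hUcont).mul continuous_const
    have hc2 : Continuous (fun y => Real.cos (U y) * Real.sin (U x)) :=
      (Real.continuous_cos.comp hUcont).mul continuous_const
    rw [intervalIntegral.integral_sub (hc1.intervalIntegrable 0 1) (hc2.intervalIntegrable 0 1)]
    rw [intervalIntegral.integral_mul_const, intervalIntegral.integral_mul_const,
      hint0, ← hCeq]
    ring
  have hrhs : ω x + p * K * (∫ y in (0:ℝ)..1, Real.sin (u t y - u t x))
      + b1 * Real.sin (V t - u t x) + b0 = V1 := by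
    rw [hintegral, hω, hb0, hu]
    have : V t - (U x + V t) = -(U x) := by ring
    rw [this, Real.sin_neg]
    rw [hsin x hx]
    field_simp
    ring
  rw [hrhs]
  have : (fun s => u s x) = fun s => V1 * s + (V0 + U x) := by
    funext s; rw [hu, hV]; ring
  rw [this]
  simpa using ((hasDerivAt_id t).const_mul V1).add_const (V0 + U x)
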